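/- If M is a proper length-factorial monoid, then the reduced monoid M_red has exactly one Betti element. -/

import Mathlib

open Multiset

namespace LF

variable (M : Type*) [CancelCommMonoid M]

/-- `s` is a factorization of the element `b` of the reduced monoid `M_red = Associates M`:
a multiset of atoms of `M_red` whose product is `b`. -/
def IsFactorizationOf (s : Multiset (Associates M)) (b : Associates M) : Prop :=
  (∀ a ∈ s, Irreducible a) ∧ s.prod = b

/-- The set of factorizations of `x : M`. -/
def FactorsOf (x : M) : Set (Multiset (Associates M)) :=
  {s | IsFactorizationOf M s (Associates.mk x)}

/-- `M` is atomic: every non-unit admits a factorization into atoms. -/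
def Atomic : Prop := ∀ x : M, ¬ IsUnit x → (FactorsOf M x).Nonempty

/-- `M` is length-factorial: factorizations of the same element with equal length coincide. -/
def LengthFactorial : Prop :=
  ∀ x : M, ∀ s ∈ FactorsOf M x, ∀ t ∈ FactorsOf M x, card s = card t → s = t

/-- `M` is a factorial (unique factorization) monoid: every element has exactly one
factorization. -/
def Factorial : Prop := ∀ x : M, ∃! s, s ∈ FactorsOf M x

/-- `(z₁, z₂)` is a factorization relation: two multisets of atoms with the same product. -/
def IsRel (z1 z2 : Multiset (Associates M)) : Prop :=
  (∀ a ∈ z1, Irreducible a) ∧ (∀ a ∈ z2, Irreducible a) ∧ z1.prod = z2.prod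

/-- A factorization relation is irredundant if the two sides share no atom. -/
def Irredundant (z1 z2 : Multiset (Associates M)) : Prop := ∀ a, a ∈ z1 → a ∉ z2

/-- Prime element of the reduced monoid. -/
def IsPrimeElem (p : Associates M) : Prop :=
  ¬ IsUnit p ∧ ∀ a b : Associates M, p ∣ a * b → p ∣ a ∨ p ∣ b

/-- A purely long atom: a non-prime atom which, whenever it appears in an irredundant
unbalanced factorization relation, appears in the longer side. -/
def PurelyLong (a : Associates M) : Prop :=
  Irreducible a ∧ ¬ IsPrimeElem M a ∧
    ∀ z1 z2, IsRel M z1 z2 → Irredundant M z1 z2 → card z1 ≠ card z2 →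
      a ∈ z1 → card z2 < card z1

/-- A purely short atom: a non-prime atom which, whenever it appears in an irredundant
unbalanced factorization relation, appears in the shorter side. -/
def PurelyShort (a : Associates M) : Prop :=
  Irreducible a ∧ ¬ IsPrimeElem M a ∧
    ∀ z1 z2, IsRel M z1 z2 → Irredundant M z1 z2 → card z1 ≠ card z2 →
      a ∈ z1 → card z1 < card z2

/-- Two factorizations `z, z'` of `b ∈ M_red` are linked by a chain of factorizations of `b`
in which consecutive factorizations have a common atom (i.e. nontrivial gcd in `Z(M)`). -/
def GcdChainRel (b : Associates M) (z z' : Multiset (Associates M)) : Prop :=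
  ∃ L : List (Multiset (Associates M)), L.head? = some z ∧ L.getLast? = some z' ∧
    (∀ w ∈ L, IsFactorizationOf M w b) ∧
    L.Chain' (fun u v => ∃ a, a ∈ u ∧ a ∈ v)

/-- `b` is a Betti element of `M_red`: its set of factorizations has at least two classes
under the chain relation `GcdChainRel`. -/
def IsBetti (b : Associates M) : Prop :=
  ∃ z z', IsFactorizationOf M z b ∧ IsFactorizationOf M z' b ∧ ¬ GcdChainRel M b z z'

theorem assoc_cancel {a b c : Associates M} (h : a * b = a * c) : b = c := by
  obtain ⟨x, rfl⟩ := Associates.mk_surjective a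
  obtain ⟨y, rfl⟩ := Associates.mk_surjective b
  obtain ⟨z, rfl⟩ := Associates.mk_surjective c
  rw [Associates.mk_mul_mk, Associates.mk_mul_mk, Associates.mk_eq_mk_iff_associated] at h
  obtain ⟨u, hu⟩ := h
  rw [Associates.mk_eq_mk_iff_associated]
  exact ⟨u, mul_left_cancel (by rw [← mul_assoc]; exact hu)⟩

theorem prod_one_empty {s : Multiset (Associates M)}
    (hirr : ∀ a ∈ s, Irreducible a) (h : s.prod = 1) : s = 0 := by
  rcases Multiset.empty_or_exists_mem s with h0 | ⟨a, ha⟩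
  · exact h0
  · exfalso
    obtain ⟨t, rfl⟩ := Multiset.exists_cons_of_mem ha
    rw [Multiset.prod_cons] at h
    exact (hirr a (Multiset.mem_cons_self a t)).not_isUnit (IsUnit.of_mul_eq_one _ h)

/-- Length-factoriality for arbitrary multisets of atoms. -/
theorem lf' (hlf : LengthFactorial M) {s t : Multiset (Associates M)}
    (hs : ∀ a ∈ s, Irreducible a) (ht : ∀ a ∈ t, Irreducible a)
    (hp : s.prod = t.prod) (hc : card s = card t) : s = t := by
  obtain ⟨x, hx⟩ := Associates.mk_surjective s.prod
  exact hlf x s ⟨hs, hx.symm⟩ t ⟨ht, by rw [← hp, hx]⟩ hc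

/-- An irredundant unbalanced relation. -/
def Rel (u v : Multiset (Associates M)) : Prop :=
  (∀ a ∈ u, Irreducible a) ∧ (∀ a ∈ v, Irreducible a) ∧ u.prod = v.prod ∧
    (∀ a, ¬ (a ∈ u ∧ a ∈ v)) ∧ card u < card v

theorem Rel.card_pos_u {u v : Multiset (Associates M)} (h : Rel M u v) : 0 < card u := by
  rw [Multiset.card_pos]
  rintro rfl
  have h0 := prod_one_empty M h.2.1 h.2.2.1.symm
  have := h.2.2.2.2
  rw [h0] at this
  simp at this

/-- Make an irredundant relation out of two distinct factorizations of the same element. -/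
theorem mk_rel (hlf : LengthFactorial M) {z z' : Multiset (Associates M)}
    (hz : ∀ a ∈ z, Irreducible a) (hz' : ∀ a ∈ z', Irreducible a)
    (hp : z.prod = z'.prod) (hne : z ≠ z') :
    ∃ u v d, Rel M u v ∧ ((z = d + u ∧ z' = d + v) ∨ (z = d + v ∧ z' = d + u)) := by
  letI : DecidableEq (Associates M) := Classical.decEq _
  set d := z ∩ z' with hd
  have hdz : d ≤ z := Multiset.inter_le_left
  have hdz' : d ≤ z' := Multiset.inter_le_right
  set u := z - d with hu
  set v := z' - d with hv
  have hzu : z = d + u := by rw [hu, add_tsub_cancel_of_le hdz]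
  have hzv : z' = d + v := by rw [hv, add_tsub_cancel_of_le hdz']
  have hirru : ∀ a ∈ u, Irreducible a := fun a ha => hz a (by rw [hzu]; exact Multiset.mem_add.2 (Or.inr ha))
  have hirrv : ∀ a ∈ v, Irreducible a := fun a ha => hz' a (by rw [hzv]; exact Multiset.mem_add.2 (Or.inr ha))
  have hpuv : u.prod = v.prod := by
    apply assoc_cancel M (a := d.prod)
    rw [← Multiset.prod_add, ← Multiset.prod_add, ← hzu, ← hzv, hp]
  have hdisj : ∀ a, ¬ (a ∈ u ∧ a ∈ v) := by
    rintro a ⟨ha, ha'⟩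
    rw [hu, ← Multiset.count_pos, Multiset.count_sub, hd, Multiset.count_inter] at ha
    rw [hv, ← Multiset.count_pos, Multiset.count_sub, hd, Multiset.count_inter] at ha'
    omega
  have hcne : card u ≠ card v := by
    intro hc
    exact hne (lf' M hlf hz hz' hp (by rw [hzu, hzv]; simp [hc]))
  rcases Nat.lt_or_ge (card u) (card v) with hlt | hge
  · exact ⟨u, v, d, ⟨hirru, hirrv, hpuv, hdisj, hlt⟩, Or.inl ⟨hzu, hzv⟩⟩
  · refine ⟨v, u, d, ⟨hirrv, hirru, hpuv.symm, fun a ⟨h1, h2⟩ => hdisj a ⟨h2, h1⟩, ?_⟩,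
      Or.inr ⟨hzu, hzv⟩⟩
    omega

/-- Existence of an irredundant relation from non-factoriality. -/
theorem exists_rel (hat : Atomic M) (hlf : LengthFactorial M) (hnf : ¬ Factorial M) :
    ∃ u v, Rel M u v := by
  rw [Factorial] at hnf
  push_neg at hnf
  obtain ⟨x, hx0⟩ := hnf
  have hx : ∀ s ∈ FactorsOf M x, ∃ t ∈ FactorsOf M x, t ≠ s := by
    intro s hs
    by_contra hc
    push_neg at hc
    exact hx0 ⟨s, hs, fun t ht => hc t ht⟩
  by_cases hux : IsUnit x
  · obtain ⟨y, hy, hne⟩ := hx (0 : Multiset (Associates M))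
      ⟨by simp, by rw [Multiset.prod_zero]; exact ((Associates.mk_eq_one).2 hux).symm⟩
    exact absurd (prod_one_empty M hy.1 (by rw [hy.2, Associates.mk_eq_one]; exact hux)) hne
  · obtain ⟨z, hz⟩ := hat x hux
    obtain ⟨z', hz', hne⟩ := hx z hz
    obtain ⟨u, v, d, hrel, _⟩ := mk_rel M hlf hz'.1 hz.1 (by rw [hz'.2, hz.2]) hne
    exact ⟨u, v, hrel⟩

/-- Proportionality of irredundant relations in a length-factorial monoid. -/
theorem rel_prop (hlf : LengthFactorial M) {u v u' v' : Multiset (Associates M)}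
    (h : Rel M u v) (h' : Rel M u' v') :
    (card v' - card u') • u = (card v - card u) • u' ∧
      (card v' - card u') • v = (card v - card u) • v' := by
  letI : DecidableEq (Associates M) := Classical.decEq _
  obtain ⟨hiu, hiv, hp, hd, hc⟩ := h
  obtain ⟨hiu', hiv', hp', hd', hc'⟩ := h'
  set g := card v - card u with hg
  set g' := card v' - card u' with hg'
  have hgpos : 0 < g := by omega
  have hg'pos : 0 < g' := by omega
  have hAB : g' • u + g • v' = g' • v + g • u' := by
    apply lf' M hlf
    · intro a ha
      rcases Multiset.mem_add.1 ha with h1 | h1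
      · exact hiu a (Multiset.mem_of_mem_nsmul h1)
      · exact hiv' a (Multiset.mem_of_mem_nsmul h1)
    · intro a ha
      rcases Multiset.mem_add.1 ha with h1 | h1
      · exact hiv a (Multiset.mem_of_mem_nsmul h1)
      · exact hiu' a (Multiset.mem_of_mem_nsmul h1)
    · rw [Multiset.prod_add, Multiset.prod_add, Multiset.prod_nsmul, Multiset.prod_nsmul,
        Multiset.prod_nsmul, Multiset.prod_nsmul, hp, hp']
    · simp only [Multiset.card_add, Multiset.card_nsmul]
      have h3 : card v = card u + g := by omega
      have h4 : card v' = card u' + g' := by omega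
      rw [h3, h4]
      ring
  have key : ∀ a, g' * count a u = g * count a u' ∧ g' * count a v = g * count a v' := by
    intro a
    have hcnt : g' * count a u + g * count a v' = g' * count a v + g * count a u' := by
      have := congrArg (count a) hAB
      simpa [Multiset.count_add, Multiset.count_nsmul] using this
    have hduv : count a u = 0 ∨ count a v = 0 := by
      by_contra hcc
      push_neg at hcc
      exact hd a ⟨Multiset.count_pos.1 (Nat.pos_of_ne_zero hcc.1),
        Multiset.count_pos.1 (Nat.pos_of_ne_zero hcc.2)⟩
    have hduv' : count a u' = 0 ∨ count a v' = 0 := by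
      by_contra hcc
      push_neg at hcc
      exact hd' a ⟨Multiset.count_pos.1 (Nat.pos_of_ne_zero hcc.1),
        Multiset.count_pos.1 (Nat.pos_of_ne_zero hcc.2)⟩
    rcases hduv with h1 | h1 <;> rcases hduv' with h2 | h2 <;>
      rw [h1, h2] at hcnt ⊢ <;>
      simp only [Nat.mul_zero, Nat.zero_add, Nat.add_zero] at hcnt ⊢
    · exact ⟨trivial, hcnt.symm⟩
    · have h4 : g' * count a v = 0 := Nat.eq_zero_of_add_eq_zero_right hcnt.symm
      have h5 : g * count a u' = 0 := Nat.eq_zero_of_add_eq_zero_left hcnt.symm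
      rcases Nat.mul_eq_zero.1 h4 with h6 | h6 <;> rcases Nat.mul_eq_zero.1 h5 with h7 | h7 <;>
        simp [h6, h7] <;> omega
    · have h4 : g' * count a u = 0 := Nat.eq_zero_of_add_eq_zero_right hcnt
      have h5 : g * count a v' = 0 := Nat.eq_zero_of_add_eq_zero_left hcnt
      rcases Nat.mul_eq_zero.1 h4 with h6 | h6 <;> rcases Nat.mul_eq_zero.1 h5 with h7 | h7 <;>
        simp [h6, h7] <;> omega
    · exact ⟨hcnt, trivial⟩
  constructor <;> (ext a; simp only [Multiset.count_nsmul])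
  · exact (key a).1
  · exact (key a).2

/-- For a minimal irredundant relation `(u,v)`, the only factorizations of `u.prod`
are `u` and `v`. -/
theorem factors_of_min (hlf : LengthFactorial M) {u v : Multiset (Associates M)}
    (h : Rel M u v)
    (hmin : ∀ u' v', Rel M u' v' → card u + card v ≤ card u' + card v')
    {w : Multiset (Associates M)} (hw : ∀ a ∈ w, Irreducible a) (hwp : w.prod = u.prod) :
    w = u ∨ w = v := by
  letI : DecidableEq (Associates M) := Classical.decEq _
  by_cases hwe : w = u
  · exact Or.inl hwe
  obtain ⟨u0, w0, d, hrel, hcase⟩ := mk_rel M hlf h.1 hw hwp.symm (fun h' => hwe h'.symm)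
  obtain ⟨hiu, hiv, hp, hd, hc⟩ := h
  set g := card v - card u with hgdef
  have hgpos : 0 < g := by omega
  have hupos : 0 < card u := Rel.card_pos_u M ⟨hiu, hiv, hp, hd, hc⟩
  rcases hcase with ⟨hu1, hw1⟩ | ⟨hu1, hw1⟩
  · -- u = d + u0, w = d + w0, Rel u0 w0 (card u0 < card w0)
    set g0 := card w0 - card u0 with hg0def
    obtain ⟨hP1, hP2⟩ := rel_prop M hlf ⟨hiu, hiv, hp, hd, hc⟩ hrel
    -- hP1 : g0 • u = g • u0, hP2 : g0 • v = g • w0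
    have hg0pos : 0 < g0 := by have := hrel.2.2.2.2; omega
    have hcard1 : g0 * card u = g * card u0 := by
      have := congrArg card hP1; simpa using this
    have hcard2 : g0 * card v = g * card w0 := by
      have := congrArg card hP2; simpa using this
    have hminle := hmin u0 w0 hrel
    have hle : card u0 ≤ card u := by
      have : u0 ≤ u := by rw [hu1]; exact Multiset.le_add_left u0 d
      exact Multiset.card_le_card this
    have hgeq : g0 = g := by nlinarith [hrel.card_pos_u M]
    have hu0 : u0 = u := by
      ext a
      have h1 := congrArg (count a) hP1
      simp only [Multiset.count_nsmul] at h1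
      rw [← hg0def, ← hgdef, hgeq] at h1
      exact (Nat.eq_of_mul_eq_mul_left hgpos h1).symm
    have hd0 : d = 0 := by
      have : card d + card u0 = card u := by rw [hu1]; simp
      rw [hu0] at this
      have : card d = 0 := by omega
      exact Multiset.card_eq_zero.1 this
    have hw0 : w0 = v := by
      ext a
      have h1 := congrArg (count a) hP2
      simp only [Multiset.count_nsmul] at h1
      rw [← hg0def, ← hgdef, hgeq] at h1
      exact (Nat.eq_of_mul_eq_mul_left hgpos h1).symm
    right
    rw [hw1, hd0, hw0, zero_add]
  · -- u = d + w0 (!), w = d + u0, with Rel u0 w0; here u0 is short side, contained in w,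
    -- and w0 ≤ u.  Orientation: rel_prop with (u,v) and (u0,w0): g0 • v = g • w0?? no:
    -- rel_prop M hlf hrel ⟨...⟩ gives proportions the other way; we derive a contradiction.
    exfalso
    obtain ⟨hP1, hP2⟩ := rel_prop M hlf ⟨hiu, hiv, hp, hd, hc⟩ hrel
    -- hP1 : g0 • u = g • u0 where g0 = card w0 - card u0
    -- but now u0 is NOT inside u; rather w0 ≤ u. Use hP2 : g0 • v = g • w0 with w0 ≤ u.
    set g0 := card w0 - card u0 with hg0def
    have hg0pos : 0 < g0 := by have := hrel.2.2.2.2; omega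
    have hvne : v ≠ 0 := by
      intro hv0
      rw [hv0] at hc
      simp at hc
    obtain ⟨a, ha⟩ := Multiset.exists_mem_of_ne_zero hvne
    have hw0u : w0 ≤ u := by rw [hu1]; exact Multiset.le_add_left w0 d
    have hua : count a u = 0 := by
      by_contra hcc
      exact hd a ⟨Multiset.count_pos.1 (Nat.pos_of_ne_zero hcc), ha⟩
    have h1 := congrArg (count a) hP2
    simp only [Multiset.count_nsmul] at h1
    have h2 : count a w0 ≤ count a u := Multiset.count_le_of_le a hw0u
    have h3 : 0 < count a v := Multiset.count_pos.2 ha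
    nlinarith

/-- In a chain whose members are all `u` or `v`, with `u,v` sharing no atom, the chain is
constant. -/
theorem chain_const {u v : Multiset (Associates M)} (hne : u ≠ v)
    (hdisj : ∀ a, ¬(a ∈ u ∧ a ∈ v)) :
    ∀ L : List (Multiset (Associates M)), L.Chain' (fun s t => ∃ a, a ∈ s ∧ a ∈ t) →
      (∀ w ∈ L, w = u ∨ w = v) → L.head? = some u → L.getLast? = some u := by
  intro L
  induction L with
  | nil => simp
  | cons x t ih =>
    intro hch hmem hh
    have hx : x = u := by simpa using hh
    cases t with
    | nil => simpa using hx
    | cons y t' =>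
      rw [List.Chain', List.isChain_cons_cons] at hch
      have hy : y = u := by
        rcases hmem y (by simp) with h1 | h1
        · exact h1
        · exfalso
          obtain ⟨a, ha1, ha2⟩ := hch.1
          rw [hx] at ha1
          rw [h1] at ha2
          exact hdisj a ⟨ha1, ha2⟩
      rw [List.getLast?_cons_cons]
      exact ih hch.2 (fun w hw => hmem w (by simp [hw])) (by simp [hy])

theorem gcdChain_symm {b : Associates M} {z z' : Multiset (Associates M)}
    (h : GcdChainRel M b z z') : GcdChainRel M b z' z := by
  obtain ⟨L, hh, hl, hf, hch⟩ := h
  refine ⟨L.reverse, ?_, ?_, ?_, ?_⟩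
  · rw [List.head?_reverse]; exact hl
  · rw [List.getLast?_reverse]; exact hh
  · intro w hw; exact hf w (List.mem_reverse.1 hw)
  · rw [List.Chain', List.isChain_reverse]
    exact List.IsChain.imp (fun s t ⟨a, h1, h2⟩ => ⟨a, h2, h1⟩) hch

/-- Any Betti element equals `u.prod` for a minimal relation `(u, v)`. -/
theorem betti_unique (hlf : LengthFactorial M) {u v : Multiset (Associates M)}
    (h : Rel M u v)
    (hmin : ∀ u' v', Rel M u' v' → card u + card v ≤ card u' + card v')
    {b : Associates M} {z z' : Multiset (Associates M)}
    (hz : IsFactorizationOf M z b) (hz' : IsFactorizationOf M z' b)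
    (hrel : Rel M z z') (hnc : ¬ GcdChainRel M b z z') : b = u.prod := by
  letI : DecidableEq (Associates M) := Classical.decEq _
  obtain ⟨hiu, hiv, hp, hd, hc⟩ := h
  set g := card v - card u with hgdef
  set g1 := card z' - card z with hg1def
  have hgpos : 0 < g := by omega
  have hg1pos : 0 < g1 := by have := hrel.2.2.2.2; omega
  have hupos : 0 < card u := Rel.card_pos_u M ⟨hiu, hiv, hp, hd, hc⟩
  obtain ⟨hP1, hP2⟩ := rel_prop M hlf ⟨hiu, hiv, hp, hd, hc⟩ hrel
  rw [← hgdef, ← hg1def] at hP1 hP2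
  have hcard1 : g1 * card u = g * card z := by
    have := congrArg card hP1; simpa using this
  have hcard2 : g1 * card v = g * card z' := by
    have := congrArg card hP2; simpa using this
  have hminle := hmin z z' hrel
  have hg1ge : g ≤ g1 := by nlinarith
  by_cases hgeq : g1 = g
  · -- z = u, so b = u.prod
    have hzu : z = u := by
      ext a
      have h1 := congrArg (count a) hP1
      simp only [Multiset.count_nsmul, hgeq] at h1
      exact (Nat.eq_of_mul_eq_mul_left hgpos h1).symm
    rw [← hz.2, hzu]
  · -- g1 > g; build an intermediate factorization and a chain, contradiction
    exfalso
    have hg1gt : g < g1 := lt_of_le_of_ne hg1ge (fun h' => hgeq h'.symm)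
    have huz : u ≤ z := by
      rw [Multiset.le_iff_count]
      intro a
      have h1 := congrArg (count a) hP1
      simp only [Multiset.count_nsmul] at h1
      nlinarith
    have hvz' : v ≤ z' := by
      rw [Multiset.le_iff_count]
      intro a
      have h1 := congrArg (count a) hP2
      simp only [Multiset.count_nsmul] at h1
      nlinarith
    have hcz : card u < card z := by nlinarith
    have hrne : z - u ≠ 0 := by
      intro h0
      have := Multiset.card_le_card huz
      have h2 : card (z - u) = card z - card u := by
        rw [Multiset.card_sub huz]
      rw [h0] at h2
      simp at h2
      omega
    have hvne : v ≠ 0 := by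
      intro hv0
      rw [hv0] at hc
      simp at hc
    set w : Multiset (Associates M) := v + (z - u) with hwdef
    have hzdecomp : z = u + (z - u) := (add_tsub_cancel_of_le huz).symm
    have hwp : w.prod = b := by
      rw [hwdef, Multiset.prod_add, ← hp, ← Multiset.prod_add, ← hzdecomp, hz.2]
    have hwirr : ∀ a ∈ w, Irreducible a := by
      intro a ha
      rcases Multiset.mem_add.1 ha with h1 | h1
      · exact hiv a h1
      · exact hz.1 a (Multiset.mem_of_le (tsub_le_self) h1)
    apply hnc
    refine ⟨[z, w, z'], rfl, rfl, ?_, ?_⟩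
    · intro s hs
      simp only [List.mem_cons, List.not_mem_nil, or_false] at hs
      rcases hs with rfl | rfl | rfl
      · exact hz
      · exact ⟨hwirr, hwp⟩
      · exact hz'
    · obtain ⟨a1, ha1⟩ := Multiset.exists_mem_of_ne_zero hrne
      obtain ⟨a2, ha2⟩ := Multiset.exists_mem_of_ne_zero hvne
      refine List.IsChain.cons_cons ⟨a1, ?_, ?_⟩ (List.IsChain.cons_cons ⟨a2, ?_, ?_⟩ (List.isChain_singleton _))
      · exact Multiset.mem_of_le (tsub_le_self) ha1
      · exact Multiset.mem_add.2 (Or.inr ha1)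
      · exact Multiset.mem_add.2 (Or.inl ha2)
      · exact Multiset.mem_of_le hvz' ha2

/-- A proper length-factorial monoid has exactly one Betti element in its
reduced monoid. -/
theorem stmt4 (hat : Atomic M) (hlf : LengthFactorial M) (hnf : ¬ Factorial M) :
    ∃! b : Associates M, IsBetti M b := by
  obtain ⟨u0, v0, h0⟩ := exists_rel M hat hlf hnf
  have hSne : Set.Nonempty {n | ∃ u v, Rel M u v ∧ card u + card v = n} := ⟨_, u0, v0, h0, rfl⟩
  obtain ⟨u, v, huv, hcard⟩ := Nat.sInf_mem hSne
  have hmin : ∀ u' v', Rel M u' v' → card u + card v ≤ card u' + card v' := by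
    intro u' v' h'
    rw [hcard]
    exact Nat.sInf_le ⟨u', v', h', rfl⟩
  have hune : u ≠ v := by
    intro h
    have := huv.2.2.2.2
    rw [h] at this
    exact absurd this (lt_irrefl _)
  refine ⟨u.prod, ?_, ?_⟩
  · refine ⟨u, v, ⟨huv.1, rfl⟩, ⟨huv.2.1, huv.2.2.1.symm⟩, ?_⟩
    rintro ⟨L, hh, hl, hf, hch⟩
    have hmem : ∀ w ∈ L, w = u ∨ w = v := fun w hw =>
      factors_of_min M hlf huv hmin (hf w hw).1 (hf w hw).2
    have hlast := chain_const M hune huv.2.2.2.1 L hch hmem hh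
    rw [hl] at hlast
    exact hune (Option.some_injective _ hlast).symm
  · intro b hb
    obtain ⟨z, z', hz, hz', hnc⟩ := hb
    have hzz : z ≠ z' := by
      rintro rfl
      exact hnc ⟨[z], rfl, rfl, by intro w hw; simp at hw; rw [hw]; exact hz,
        List.isChain_singleton _⟩
    have hdisj : ∀ a, ¬(a ∈ z ∧ a ∈ z') := by
      rintro a ⟨h1, h2⟩
      refine hnc ⟨[z, z'], rfl, rfl, ?_, ?_⟩
      · intro w hw
        simp only [List.mem_cons, List.not_mem_nil, or_false] at hw
        rcases hw with rfl | rfl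
        · exact hz
        · exact hz'
      · exact List.IsChain.cons_cons ⟨a, h1, h2⟩ (List.isChain_singleton _)
    have hpeq : z.prod = z'.prod := hz.2.trans hz'.2.symm
    have hcne : card z ≠ card z' := fun hc => hzz (lf' M hlf hz.1 hz'.1 hpeq hc)
    rcases Nat.lt_or_ge (card z) (card z') with hlt | hge
    · exact betti_unique M hlf huv hmin hz hz' ⟨hz.1, hz'.1, hpeq, hdisj, hlt⟩ hnc
    · have hlt' : card z' < card z := by omega
      exact betti_unique M hlf huv hmin hz' hz
        ⟨hz'.1, hz.1, hpeq.symm, fun a ⟨h1, h2⟩ => hdisj a ⟨h2, h1⟩, hlt'⟩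
        (fun h => hnc (gcdChain_symm M h))


end LF
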